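/- Let p be an odd prime, n ≥ 3, r = p^{n-2}+1, and G = ⟨a,b : a^{p^{n-1}} = b^p = 1, bab^{-1} = a^r⟩. Consider the semidirect product G' = G ⋊ C_2 where the generator t of C_2 acts by tat = a^{-1}, tbt = b. Then G' cannot be generated by three involutions x_1, x_2, x_3 with x_1 x_2 x_3 of order 2p; indeed, every involution of G' \ G has the form t a^k for some k, and any subgroup generated by three such involutions together is proper in G'. -/

import Mathlib

/-- Relators of G' = G ⋊ C₂ = ⟨a, b, t : a^{p^{n-1}} = b^p = t² = 1,
bab⁻¹ = a^{p^{n-2}+1}, tat⁻¹ = a⁻¹, tbt⁻¹ = b⟩ (generators a, b, t at 0, 1, 2). -/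
def extRels (p n : ℕ) : Set (FreeGroup (Fin 3)) :=
  let a := FreeGroup.of (0 : Fin 3)
  let b := FreeGroup.of (1 : Fin 3)
  let t := FreeGroup.of (2 : Fin 3)
  {a ^ p ^ (n - 1), b ^ p, b * a * b⁻¹ * (a ^ (p ^ (n - 2) + 1))⁻¹,
    t ^ 2, t * a * t⁻¹ * a, t * b * t⁻¹ * b⁻¹}

set_option maxHeartbeats 1000000 in
/-- In G' = G ⋊ C₂ (t inverting a, centralizing b), every involution
outside G = ⟨a, b⟩ has the form t·a^k, no three involutions generate G', and in
particular G' is not generated by three involutions whose product has order 2p. -/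
theorem no_extension_by_involutions (p n : ℕ) (hp : p.Prime) (hodd : Odd p)
    (hn : 3 ≤ n) :
    letI G' := PresentedGroup (extRels p n)
    let a : G' := PresentedGroup.of 0
    let b : G' := PresentedGroup.of 1
    let t : G' := PresentedGroup.of 2
    (∀ x : G', orderOf x = 2 → x ∉ Subgroup.closure ({a, b} : Set G') →
      ∃ k : ℕ, x = t * a ^ k) ∧
    (∀ x₁ x₂ x₃ : G', orderOf x₁ = 2 → orderOf x₂ = 2 → orderOf x₃ = 2 →
      Subgroup.closure ({x₁, x₂, x₃} : Set G') ≠ ⊤) ∧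
    ¬ ∃ x₁ x₂ x₃ : G', orderOf x₁ = 2 ∧ orderOf x₂ = 2 ∧ orderOf x₃ = 2 ∧
        orderOf (x₁ * x₂ * x₃) = 2 * p ∧
        Subgroup.closure ({x₁, x₂, x₃} : Set G') = ⊤ := by
  intro a b t
  haveI : Fact p.Prime := ⟨hp⟩
  have hp2 : p ≠ 2 := by rintro rfl; exact (by decide : ¬ Odd 2) hodd
  set N := p ^ (n - 1) with hNdef
  set R := p ^ (n - 2) + 1 with hRdef
  have hN2 : 2 ≤ N := le_trans hp.two_le (Nat.le_self_pow (by omega) p)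
  have hp1 : 1 ≤ p := hp.one_lt.le
  -- basic relations in PresentedGroup (extRels p n)
  have hrel : ∀ r ∈ extRels p n, (PresentedGroup.mk (extRels p n) r) = 1 := fun r hr =>
    (QuotientGroup.eq_one_iff r).mpr (Subgroup.subset_normalClosure hr)
  have hA : a ^ N = 1 := by
    have h := hrel ((FreeGroup.of 0) ^ p ^ (n-1)) (by simp [extRels])
    simp only [map_pow] at h; exact h
  have hB : b ^ p = 1 := by
    have h := hrel ((FreeGroup.of 1) ^ p) (by simp [extRels])
    simp only [map_pow] at h; exact h
  have hBA : b * a * b⁻¹ = a ^ R := by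
    have := hrel (FreeGroup.of 1 * FreeGroup.of 0 * (FreeGroup.of 1)⁻¹ *
      ((FreeGroup.of 0) ^ (p ^ (n-2) + 1))⁻¹) (by simp [extRels])
    simp only [map_mul, map_inv, map_pow] at this
    exact mul_inv_eq_one.mp this
  have hT : t * t = 1 := by
    have := hrel ((FreeGroup.of 2) ^ 2) (by simp [extRels])
    simp only [sq, map_mul] at this; exact this
  have hTA : t * a * t⁻¹ = a⁻¹ := by
    have := hrel (FreeGroup.of 2 * FreeGroup.of 0 * (FreeGroup.of 2)⁻¹ *
      FreeGroup.of 0) (by simp [extRels])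
    simp only [map_mul, map_inv] at this
    rw [← mul_inv_eq_one, inv_inv]; exact this
  have hTB : t * b = b * t := by
    have h0 := hrel (FreeGroup.of 2 * FreeGroup.of 1 * (FreeGroup.of 2)⁻¹ *
      (FreeGroup.of 1)⁻¹) (by simp [extRels])
    simp only [map_mul, map_inv] at h0
    have h2 : (t * b * t⁻¹ * b⁻¹ : PresentedGroup (extRels p n)) = 1 := h0
    have h3 := mul_inv_eq_one.mp h2
    calc t * b = (t * b * t⁻¹) * t := by group
    _ = b * t := by rw [h3]
  have htinv : t⁻¹ = t := inv_eq_of_mul_eq_one_left hT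
  -- inverses as powers
  have hainv : ∀ i : ℕ, a ^ (i * (N - 1)) = (a ^ i)⁻¹ := by
    intro i
    apply eq_inv_of_mul_eq_one_left
    rw [← pow_add]
    have he : i * (N - 1) + i = N * i := by
      have h1 : N - 1 + 1 = N := Nat.sub_add_cancel (by omega)
      calc i * (N - 1) + i = i * (N - 1 + 1) := by ring
      _ = N * i := by rw [h1]; ring
    rw [he, pow_mul, hA, one_pow]
  have hbinv : ∀ j : ℕ, b ^ (j * (p - 1)) = (b ^ j)⁻¹ := by
    intro j
    apply eq_inv_of_mul_eq_one_left
    rw [← pow_add]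
    have he : j * (p - 1) + j = p * j := by
      have h1 : p - 1 + 1 = p := Nat.sub_add_cancel (by omega)
      calc j * (p - 1) + j = j * (p - 1 + 1) := by ring
      _ = p * j := by rw [h1]; ring
    rw [he, pow_mul, hB, one_pow]
  -- commutation rules
  have hscB : SemiconjBy b a (a ^ R) := by
    show b * a = a ^ R * b
    calc b * a = (b * a * b⁻¹) * b := by group
    _ = a ^ R * b := by rw [hBA]
  have hscT : SemiconjBy t a (a ^ (N - 1)) := by
    show t * a = a ^ (N - 1) * t
    have h1 : (a : PresentedGroup (extRels p n))⁻¹ = a ^ (N - 1) := by simpa using (hainv 1).symm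
    calc t * a = (t * a * t⁻¹) * t := by group
    _ = a⁻¹ * t := by rw [hTA]
    _ = a ^ (N - 1) * t := by rw [h1]
  have hBi : ∀ i : ℕ, b * a ^ i = a ^ (R * i) * b := by
    intro i
    have := hscB.pow_right i
    rwa [← pow_mul] at this
  have hTi : ∀ i : ℕ, t * a ^ i = a ^ ((N - 1) * i) * t := by
    intro i
    have := hscT.pow_right i
    rwa [← pow_mul] at this
  have hBji : ∀ j i : ℕ, b ^ j * a ^ i = a ^ (R ^ j * i) * b ^ j := by
    intro j
    induction j with
    | zero => intro i; simp
    | succ j ih =>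
      intro i
      calc b ^ (j + 1) * a ^ i = b ^ j * (b * a ^ i) := by rw [pow_succ, mul_assoc]
      _ = b ^ j * (a ^ (R * i) * b) := by rw [hBi]
      _ = (b ^ j * a ^ (R * i)) * b := by rw [mul_assoc]
      _ = (a ^ (R ^ j * (R * i)) * b ^ j) * b := by rw [ih]
      _ = a ^ (R ^ (j + 1) * i) * b ^ (j + 1) := by
          rw [mul_assoc, ← pow_succ]
          congr 2
          ring
  have hTBj : ∀ j : ℕ, t * b ^ j = b ^ j * t := fun j => (Commute.pow_right hTB j)
  -- the three "move a generator past a normal form" lemmas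
  have keyA : ∀ (i j : ℕ) (ε : Bool) (m : ℕ),
      (a ^ i * b ^ j * cond ε t 1) * a ^ m
        = a ^ (i + R ^ j * cond ε ((N - 1) * m) m) * b ^ j * cond ε t 1 := by
    intro i j ε m
    have hmove : (cond ε t 1 : PresentedGroup (extRels p n)) * a ^ m = a ^ (cond ε ((N - 1) * m) m) * cond ε t 1 := by
      cases ε
      · simp
      · simpa using hTi m
    calc (a ^ i * b ^ j * cond ε t 1) * a ^ m
        = a ^ i * (b ^ j * (cond ε t 1 * a ^ m)) := by group
    _ = a ^ i * (b ^ j * (a ^ (cond ε ((N - 1) * m) m) * cond ε t 1)) := by rw [hmove]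
    _ = a ^ i * ((b ^ j * a ^ (cond ε ((N - 1) * m) m)) * cond ε t 1) := by group
    _ = a ^ i * ((a ^ (R ^ j * cond ε ((N - 1) * m) m) * b ^ j) * cond ε t 1) := by rw [hBji]
    _ = (a ^ i * a ^ (R ^ j * cond ε ((N - 1) * m) m)) * b ^ j * cond ε t 1 := by group
    _ = a ^ (i + R ^ j * cond ε ((N - 1) * m) m) * b ^ j * cond ε t 1 := by rw [← pow_add]
  have keyB : ∀ (i j : ℕ) (ε : Bool) (m : ℕ),
      (a ^ i * b ^ j * cond ε t 1) * b ^ m = a ^ i * b ^ (j + m) * cond ε t 1 := by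
    intro i j ε m
    have hmove : (cond ε t 1 : PresentedGroup (extRels p n)) * b ^ m = b ^ m * cond ε t 1 := by
      cases ε
      · simp
      · exact hTBj m
    calc (a ^ i * b ^ j * cond ε t 1) * b ^ m
        = a ^ i * (b ^ j * (cond ε t 1 * b ^ m)) := by group
    _ = a ^ i * (b ^ j * (b ^ m * cond ε t 1)) := by rw [hmove]
    _ = a ^ i * (b ^ j * b ^ m) * cond ε t 1 := by group
    _ = a ^ i * b ^ (j + m) * cond ε t 1 := by rw [← pow_add]
  have keyT : ∀ (i j : ℕ) (ε : Bool),
      (a ^ i * b ^ j * cond ε t 1) * t = a ^ i * b ^ j * cond (!ε) t 1 := by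
    intro i j ε
    cases ε
    · simp
    · show (a ^ i * b ^ j * t) * t = a ^ i * b ^ j * 1
      rw [mul_assoc, hT]
  -- every element has a normal form a^i b^j t^ε
  have hgen : ∀ g : PresentedGroup (extRels p n), g ∈ Subgroup.closure ({a, b, t} : Set (PresentedGroup (extRels p n))) := by
    intro g
    have h0 := PresentedGroup.closure_range_of (extRels p n)
    have hsub : Set.range (PresentedGroup.of : Fin 3 → PresentedGroup (extRels p n)) ⊆ {a, b, t} := by
      rintro _ ⟨i, rfl⟩
      fin_cases i
      · exact Set.mem_insert _ _
      · exact Set.mem_insert_of_mem _ (Set.mem_insert _ _)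
      · exact Set.mem_insert_of_mem _ (Set.mem_insert_of_mem _ rfl)
    exact (Subgroup.closure_mono hsub) (h0 ▸ Subgroup.mem_top g)
  have hnf : ∀ g : PresentedGroup (extRels p n), ∃ i j : ℕ, ∃ ε : Bool, g = a ^ i * b ^ j * cond ε t 1 := by
    intro g
    refine Subgroup.closure_induction_right
      (p := fun x _ => ∃ i j : ℕ, ∃ ε : Bool, x = a ^ i * b ^ j * cond ε t 1)
      ⟨0, 0, false, by simp⟩ ?_ ?_ (hgen g)
    · rintro x hx y hy ⟨i, j, ε, rfl⟩
      simp only [Set.mem_insert_iff, Set.mem_singleton_iff] at hy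
      rcases hy with rfl | rfl | rfl
      · have := keyA i j ε 1
        rw [pow_one] at this
        exact ⟨_, _, _, this⟩
      · have := keyB i j ε 1
        rw [pow_one] at this
        exact ⟨_, _, _, this⟩
      · exact ⟨_, _, _, keyT i j ε⟩
    · rintro x hx y hy ⟨i, j, ε, rfl⟩
      simp only [Set.mem_insert_iff, Set.mem_singleton_iff] at hy
      rcases hy with rfl | rfl | rfl
      · have ha1 : (a : PresentedGroup (extRels p n))⁻¹ = a ^ (N - 1) := by simpa using (hainv 1).symm
        rw [ha1]
        exact ⟨_, _, _, keyA i j ε (N - 1)⟩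
      · have hb1 : (b : PresentedGroup (extRels p n))⁻¹ = b ^ (p - 1) := by simpa using (hbinv 1).symm
        rw [hb1]
        exact ⟨_, _, _, keyB i j ε (p - 1)⟩
      · rw [htinv]
        exact ⟨_, _, _, keyT i j ε⟩
  -- the homomorphism χ : PresentedGroup (extRels p n) → Multiplicative (ZMod p)
  set f : Fin 3 → Multiplicative (ZMod p) :=
    fun i => if i = 1 then Multiplicative.ofAdd (1 : ZMod p) else 1 with hfdef
  have f0 : f 0 = 1 := if_neg (by decide)
  have f1 : f 1 = Multiplicative.ofAdd (1 : ZMod p) := if_pos rfl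
  have f2 : f 2 = 1 := if_neg (by decide)
  have hf : ∀ r ∈ extRels p n, FreeGroup.lift f r = 1 := by
    intro r hr
    simp only [extRels, Set.mem_insert_iff, Set.mem_singleton_iff] at hr
    rcases hr with rfl | rfl | rfl | rfl | rfl | rfl
    · simp [f0]
    · rw [map_pow, FreeGroup.lift_apply_of, f1, ← ofAdd_nsmul]
      simp [nsmul_eq_mul, ZMod.natCast_self]
    · simp only [map_mul, map_inv, map_pow, FreeGroup.lift_apply_of, f0, f1]
      group
    · simp [f2]
    · simp only [map_mul, map_inv, FreeGroup.lift_apply_of, f0, f2]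
      group
    · simp only [map_mul, map_inv, FreeGroup.lift_apply_of, f1, f2]
      group
  set χ : PresentedGroup (extRels p n) →* Multiplicative (ZMod p) := PresentedGroup.toGroup hf with hχdef
  have hχa : χ a = 1 := (PresentedGroup.toGroup.of hf).trans f0
  have hχb : χ b = Multiplicative.ofAdd (1 : ZMod p) := (PresentedGroup.toGroup.of hf).trans f1
  have hχt : χ t = 1 := (PresentedGroup.toGroup.of hf).trans f2
  -- involutions lie in the kernel of χ
  have htwo : (2 : ZMod p) ≠ 0 := by
    intro h
    have := (ZMod.natCast_eq_zero_iff 2 p).mp (by exact_mod_cast h)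
    exact hp2 ((Nat.prime_dvd_prime_iff_eq hp Nat.prime_two).mp this)
  have ord2 : ∀ x : PresentedGroup (extRels p n), orderOf x = 2 → χ x = 1 := by
    intro x hx
    have hx2 : x * x = 1 := by
      have := pow_orderOf_eq_one x
      rwa [hx, sq] at this
    have h1 : χ x * χ x = 1 := by rw [← map_mul, hx2, map_one]
    have h2 : (χ x).toAdd + (χ x).toAdd = 0 := by
      have := congrArg Multiplicative.toAdd h1
      simpa using this
    have h3 : (2 : ZMod p) * (χ x).toAdd = 0 := by rw [two_mul]; exact h2
    have h4 : (χ x).toAdd = 0 := by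
      rcases mul_eq_zero.mp h3 with h | h
      · exact absurd h htwo
      · exact h
    rw [← ofAdd_toAdd (χ x), h4]; rfl
  -- part 2
  have part2 : ∀ x₁ x₂ x₃ : PresentedGroup (extRels p n), orderOf x₁ = 2 → orderOf x₂ = 2 → orderOf x₃ = 2 →
      Subgroup.closure ({x₁, x₂, x₃} : Set (PresentedGroup (extRels p n))) ≠ ⊤ := by
    intro x₁ x₂ x₃ h1 h2 h3 htop
    have hker : ∀ g ∈ Subgroup.closure ({x₁, x₂, x₃} : Set (PresentedGroup (extRels p n))), χ g = 1 := by
      intro g hg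
      refine Subgroup.closure_induction ?_ (map_one χ)
        (fun y z _ _ hy hz => by rw [map_mul, hy, hz, one_mul])
        (fun y _ hy => by rw [map_inv, hy, inv_one]) hg
      rintro y (rfl | rfl | rfl)
      · exact ord2 _ h1
      · exact ord2 _ h2
      · exact ord2 _ h3
    have hbk := hker b (htop ▸ Subgroup.mem_top b)
    rw [hχb] at hbk
    have : (1 : ZMod p) = 0 := by
      have := congrArg Multiplicative.toAdd hbk
      simpa using this
    exact one_ne_zero this
  refine ⟨?_, part2, ?_⟩
  · -- part 1
    intro x hx hxmem
    obtain ⟨i, j, ε, rfl⟩ := hnf x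
    cases ε with
    | false =>
      refine absurd ?_ hxmem
      have ha' : a ∈ ({a, b} : Set (PresentedGroup (extRels p n))) := Set.mem_insert _ _
      have hb' : b ∈ ({a, b} : Set (PresentedGroup (extRels p n))) := Set.mem_insert_of_mem _ rfl
      have h1 : a ^ i ∈ Subgroup.closure ({a, b} : Set (PresentedGroup (extRels p n))) :=
        pow_mem (Subgroup.subset_closure ha') i
      have h2 : b ^ j ∈ Subgroup.closure ({a, b} : Set (PresentedGroup (extRels p n))) :=
        pow_mem (Subgroup.subset_closure hb') j
      show a ^ i * b ^ j * 1 ∈ _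
      rw [mul_one]
      exact mul_mem h1 h2
    | true =>
      have hχx : χ (a ^ i * b ^ j * cond true t 1) = Multiplicative.ofAdd (j : ZMod p) := by
        simp only [cond, map_mul, map_pow, hχa, hχb, hχt, one_pow, one_mul, mul_one]
        rw [← ofAdd_nsmul]
        simp [nsmul_eq_mul]
      have hj0 : (j : ZMod p) = 0 := by
        have h1 := ord2 _ hx
        rw [hχx] at h1
        have := congrArg Multiplicative.toAdd h1
        simpa using this
      obtain ⟨m, rfl⟩ := (ZMod.natCast_eq_zero_iff j p).mp hj0
      have hbj : (b : PresentedGroup (extRels p n)) ^ (p * m) = 1 := by rw [pow_mul, hB, one_pow]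
      refine ⟨i * (N - 1), ?_⟩
      have h1 : t * a ^ (i * (N - 1)) = a ^ ((N - 1) * (i * (N - 1))) * t := hTi _
      have h2 : (a : PresentedGroup (extRels p n)) ^ ((N - 1) * (i * (N - 1))) = a ^ i := by
        rw [mul_comm (N - 1) (i * (N - 1)), hainv (i * (N - 1)), hainv i, inv_inv]
      rw [h1, h2, hbj]
      simp [cond]
  · -- part 3
    rintro ⟨x₁, x₂, x₃, h1, h2, h3, _, htop⟩
    exact part2 x₁ x₂ x₃ h1 h2 h3 htop
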